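/- Let F be an r-flame subgraph of a digraph D and e ∈ E(D)\E(F) an edge with head v such that e is a coloop of the gammoid G_{F+e}(v) (i.e., I + e ∈ G_{F+e}(v) for every I ∈ G_F(v)). Then F + e is an r-flame. -/

import Mathlib

attribute [local instance] Classical.propDecidable

/-- A finite digraph: edges `E` with tail and head maps (parallel edges allowed). -/
structure Digraph' (V E : Type) where
  tail : E → V
  head : E → V

namespace Digraph'

variable {V E : Type} [Fintype V] [Fintype E]

/-- `es` is a directed walk from `r` to `v`. -/
def IsWalk (D : Digraph' V E) : V → V → List E → Prop
  | r, v, [] => r = v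
  | r, v, e :: es => D.tail e = r ∧ D.IsWalk (D.head e) v es

/-- `es` is a directed path from `r` to `v` using only edges of `F`. -/
def IsPathIn (D : Digraph' V E) (F : Set E) (r v : V) (es : List E) : Prop :=
  D.IsWalk r v es ∧ (∀ e ∈ es, e ∈ F) ∧ (r :: es.map D.head).Nodup

/-- The members of a list of paths are pairwise edge-disjoint. -/
def EdgeDisjoint (P : List (List E)) : Prop :=
  P.Pairwise (fun p q => ∀ e, e ∈ p → e ∉ q)

/-- The maximum number of pairwise edge-disjoint `r → v` paths inside `F`. -/
noncomputable def lam (D : Digraph' V E) (F : Set E) (r v : V) : ℕ :=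
  sSup {k | ∃ P : List (List E), P.length = k ∧ (∀ p ∈ P, D.IsPathIn F r v p) ∧
    EdgeDisjoint P}

/-- The set of edges of `F` whose head is `v`. -/
def inEdges (D : Digraph' V E) (F : Set E) (v : V) : Set E := {e ∈ F | D.head e = v}

/-- The in-degree of `v` in the subgraph `F`. -/
noncomputable def indeg (D : Digraph' V E) (F : Set E) (v : V) : ℕ :=
  (D.inEdges F v).ncard

/-- `I` arises as the set of last edges of a system of pairwise edge-disjoint
`r → v` paths in `F` (membership in the gammoid `G_F(v)`). -/
def InGammoid (D : Digraph' V E) (F : Set E) (r v : V) (I : Set E) : Prop :=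
  ∃ P : List (List E), (∀ p ∈ P, D.IsPathIn F r v p) ∧ EdgeDisjoint P ∧
    I = {e | ∃ p ∈ P, p.getLast? = some e}

/-- `F` is an `r`-flame: the in-degree of each `v ≠ r` equals λ_F(r,v). -/
def IsFlame (D : Digraph' V E) (r : V) (F : Set E) : Prop :=
  ∀ v, v ≠ r → D.indeg F v = D.lam F r v

/-- Total of `x` on the in-edges of `v`. -/
noncomputable def inflow (D : Digraph' V E) (x : E → ℝ) (v : V) : ℝ :=
  ∑ e, if D.head e = v then x e else 0

/-- Total of `x` on the out-edges of `v`. -/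
noncomputable def outflow (D : Digraph' V E) (x : E → ℝ) (v : V) : ℝ :=
  ∑ e, if D.tail e = v then x e else 0

/-- Total of `x` on the edges entering the vertex set `W`. -/
noncomputable def rhoSet (D : Digraph' V E) (x : E → ℝ) (W : Set V) : ℝ :=
  ∑ e, if D.head e ∈ W ∧ D.tail e ∉ W then x e else 0

/-- `x` is a (nonnegative) `r → v` flow. -/
def IsFlow (D : Digraph' V E) (r v : V) (x : E → ℝ) : Prop :=
  (∀ e, 0 ≤ x e) ∧ (∀ u, u ≠ r → u ≠ v → D.inflow x u = D.outflow x u) ∧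
    D.inflow x r = 0 ∧ D.outflow x v = 0

/-- The flow-connectivity from `r` to `v` under capacity `c`. -/
noncomputable def lamF (D : Digraph' V E) (r v : V) (c : E → ℝ) : ℝ :=
  sSup {a | ∃ x, D.IsFlow r v x ∧ x ≤ c ∧ D.outflow x r = a}

/-- Characteristic vector of an edge. -/
noncomputable def chi (e : E) : E → ℝ := fun e' => if e' = e then 1 else 0

/-- Restriction of `x` to the in-edges of `v` (zero elsewhere). -/
noncomputable def restrictIn (D : Digraph' V E) (v : V) (x : E → ℝ) : E → ℝ :=
  fun e => if D.head e = v then x e else 0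

/-- The polygammoid `G_c(v)`: restrictions to the in-edges of `v`
of `r → v` flows bounded by `c`. -/
def polygammoid (D : Digraph' V E) (r v : V) (c : E → ℝ) : Set (E → ℝ) :=
  {s | ∃ x, D.IsFlow r v x ∧ x ≤ c ∧ D.restrictIn v x = s}

/-- `D` has no parallel edges. -/
def NoParallel (D : Digraph' V E) : Prop :=
  ∀ e e', D.tail e = D.tail e' → D.head e = D.head e' → e = e'

/-- `es` is a directed cycle. -/
def IsCycle (D : Digraph' V E) (es : List E) : Prop :=
  es ≠ [] ∧ ∃ u, D.IsWalk u u es ∧ (es.map D.head).Nodup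

/-- Characteristic vector of a list of edges. -/
noncomputable def charVec (es : List E) : E → ℝ :=
  fun e => ((es.filter (fun e' => e' = e)).length : ℝ)



lemma walk_getLast (D : Digraph' V E) : ∀ (es : List E) (r v : V), D.IsWalk r v es →
    ∀ e', es.getLast? = some e' → D.head e' = v := by
  intro es
  induction es with
  | nil => intro r v _ e' h; simp at h
  | cons a es ih =>
    intro r v hw e' h
    rcases hw with ⟨_, hw⟩
    cases es with
    | nil => simp at h; subst h; exact hw
    | cons b es =>
      rw [List.getLast?_cons_cons] at h
      exact ih _ _ hw e' h

lemma lastEdges_spec (D : Digraph' V E) {F : Set E} {r v : V} (hv : v ≠ r)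
    {P : List (List E)} (hP : ∀ p ∈ P, D.IsPathIn F r v p) (hD : EdgeDisjoint P) :
    ∃ L : List E, L.length = P.length ∧ L.Nodup ∧ (∀ e ∈ L, e ∈ D.inEdges F v) ∧
      (∀ e, e ∈ L ↔ ∃ p ∈ P, p.getLast? = some e) := by
  refine ⟨P.filterMap List.getLast?, ?_, ?_, ?_, ?_⟩
  · have : ∀ p ∈ P, (List.getLast? p).isSome := by
      intro p hp
      rcases hP p hp with ⟨hw, _, _⟩
      cases p with
      | nil => exact absurd hw.symm hv
      | cons a l => simp [List.getLast?_isSome]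
    clear hP hD
    induction P with
    | nil => simp
    | cons p P ih =>
      have hs := this p (by simp)
      rcases Option.isSome_iff_exists.mp hs with ⟨e', he'⟩
      simp [List.filterMap_cons, he', ih (fun q hq => this q (by simp [hq]))]
  · rw [List.Nodup, List.pairwise_filterMap]
    refine hD.imp ?_
    intro p q hpq x hx y hy hxy
    exact hpq x (List.mem_of_mem_getLast? hx) (hxy ▸ List.mem_of_mem_getLast? hy)
  · intro e' he'
    rcases List.mem_filterMap.mp he' with ⟨p, hp, hlast⟩
    have hmem : e' ∈ p := List.mem_of_mem_getLast? hlast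
    rcases hP p hp with ⟨hw, hF, _⟩
    exact ⟨hF e' hmem, D.walk_getLast p r v hw e' hlast⟩
  · intro e'; simpa using List.mem_filterMap

lemma length_le_indeg (D : Digraph' V E) {F : Set E} {r v : V} (hv : v ≠ r)
    {P : List (List E)} (hP : ∀ p ∈ P, D.IsPathIn F r v p) (hD : EdgeDisjoint P) :
    P.length ≤ D.indeg F v := by
  obtain ⟨L, hLlen, hLnd, hLin, _⟩ := D.lastEdges_spec hv hP hD
  calc P.length = L.length := hLlen.symm
    _ = L.toFinset.card := (List.toFinset_card_of_nodup hLnd).symm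
    _ = (↑L.toFinset : Set E).ncard := (Set.ncard_coe_finset _).symm
    _ ≤ D.indeg F v := Set.ncard_le_ncard (fun x hx => hLin x (List.mem_toFinset.mp hx))
        (Set.toFinite _)

lemma zero_mem_lamSet (D : Digraph' V E) (F : Set E) (r v : V) :
    (0 : ℕ) ∈ {k | ∃ P : List (List E), P.length = k ∧ (∀ p ∈ P, D.IsPathIn F r v p) ∧
      EdgeDisjoint P} :=
  ⟨[], rfl, by simp, List.Pairwise.nil⟩

lemma lam_le_indeg (D : Digraph' V E) {F : Set E} {r v : V} (hv : v ≠ r) :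
    D.lam F r v ≤ D.indeg F v := by
  refine csSup_le ⟨0, D.zero_mem_lamSet F r v⟩ ?_
  rintro k ⟨P, rfl, hP, hD⟩
  exact D.length_le_indeg hv hP hD

lemma le_lam (D : Digraph' V E) {F : Set E} {r v : V} (hv : v ≠ r)
    {P : List (List E)} (hP : ∀ p ∈ P, D.IsPathIn F r v p) (hD : EdgeDisjoint P) :
    P.length ≤ D.lam F r v :=
  le_csSup ⟨D.indeg F v, by rintro k ⟨Q, rfl, hQ, hQD⟩; exact D.length_le_indeg hv hQ hQD⟩
    ⟨P, rfl, hP, hD⟩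

lemma exists_opt (D : Digraph' V E) {F : Set E} {r v : V} (hv : v ≠ r) :
    ∃ P : List (List E), P.length = D.lam F r v ∧ (∀ p ∈ P, D.IsPathIn F r v p) ∧
      EdgeDisjoint P := by
  have := Nat.sSup_mem ⟨0, D.zero_mem_lamSet F r v⟩
    ⟨D.indeg F v, by rintro k ⟨Q, rfl, hQ, hQD⟩; exact D.length_le_indeg hv hQ hQD⟩
  exact this

lemma gammoid_set_ncard_le (D : Digraph' V E) (Q : List (List E)) :
    ({e | ∃ p ∈ Q, p.getLast? = some e} : Set E).ncard ≤ Q.length := by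
  have hset : ({e | ∃ p ∈ Q, p.getLast? = some e} : Set E)
      = ↑(Q.filterMap List.getLast?).toFinset := by
    ext x; simp [List.mem_filterMap]
  rw [hset, Set.ncard_coe_finset]
  calc (Q.filterMap List.getLast?).toFinset.card ≤ (Q.filterMap List.getLast?).length :=
        List.toFinset_card_le _
    _ ≤ Q.length := List.length_filterMap_le _ _

lemma pathIn_mono (D : Digraph' V E) {F F' : Set E} (h : F ⊆ F') {r v : V} {p : List E}
    (hp : D.IsPathIn F r v p) : D.IsPathIn F' r v p :=
  ⟨hp.1, fun e he => h (hp.2.1 e he), hp.2.2⟩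

end Digraph'

open Digraph' in
/-- If `F` is an `r`-flame, `e ∉ F` has head `v`, and `e` is a coloop of the
gammoid `G_{F+e}(v)`, then `F + e` is an `r`-flame. -/
theorem stmt12 {V E : Type} [Fintype V] [Fintype E] (D : Digraph' V E) (r : V)
    (hr : ∀ e, D.head e ≠ r) (F : Set E) (hF : D.IsFlame r F)
    (e : E) (he : e ∉ F)
    (hcoloop : ∀ I : Set E, D.InGammoid F r (D.head e) I →
      D.InGammoid (insert e F) r (D.head e) (insert e I)) :
    D.IsFlame r (insert e F) := by
  intro v hv
  have hsub : F ⊆ insert e F := Set.subset_insert e F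
  by_cases hve : D.head e = v
  · subst hve
    set v := D.head e with hvdef
    have hin : D.inEdges (insert e F) v = insert e (D.inEdges F v) := by
      ext f
      simp only [inEdges, Set.mem_setOf_eq, Set.mem_insert_iff]
      constructor
      · rintro ⟨hf | hf, hh⟩
        · exact Or.inl hf
        · exact Or.inr ⟨hf, hh⟩
      · rintro (rfl | ⟨hf, hh⟩)
        · exact ⟨Or.inl rfl, rfl⟩
        · exact ⟨Or.inr hf, hh⟩
    have henin : e ∉ D.inEdges F v := fun h => he h.1
    have hindeg : D.indeg (insert e F) v = D.indeg F v + 1 := by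
      rw [indeg, hin, Set.ncard_insert_of_notMem henin (Set.toFinite _)]; rfl
    obtain ⟨P, hlen, hP, hDj⟩ := D.exists_opt (F := F) (r := r) hv
    set I : Set E := {e' | ∃ p ∈ P, p.getLast? = some e'} with hIdef
    obtain ⟨P', hP', hDj', hI'⟩ := hcoloop I ⟨P, hP, hDj, rfl⟩
    obtain ⟨L, hLlen, hLnd, hLin, hLiff⟩ := D.lastEdges_spec hv hP hDj
    have hIL : I = ↑L.toFinset := by
      ext x; simp only [Finset.coe_sort_coe, Finset.mem_coe, List.mem_toFinset, hIdef,
        Set.mem_setOf_eq]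
      exact (hLiff x).symm
    have hcardI : I.ncard = P.length := by
      rw [hIL, Set.ncard_coe_finset, List.toFinset_card_of_nodup hLnd, hLlen]
    have heI : e ∉ I := by
      rintro ⟨p, hp, hl⟩
      exact he ((hP p hp).2.1 e (List.mem_of_mem_getLast? hl))
    have hins : (insert e I).ncard = P.length + 1 := by
      rw [Set.ncard_insert_of_notMem heI (Set.toFinite _), hcardI]
    have hle' : (insert e I).ncard ≤ P'.length := by
      rw [hI']; exact D.gammoid_set_ncard_le P'
    have h1 : D.indeg F v + 1 ≤ D.lam (insert e F) r v := by
      have := D.le_lam hv hP' hDj'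
      have h2 : D.indeg F v = P.length := by rw [hlen, hF v hv]
      omega
    have h2 := D.lam_le_indeg (F := insert e F) (r := r) hv
    omega
  · have hin : D.inEdges (insert e F) v = D.inEdges F v := by
      ext f
      simp only [inEdges, Set.mem_setOf_eq, Set.mem_insert_iff]
      constructor
      · rintro ⟨rfl | hf, hh⟩
        · exact absurd hh hve
        · exact ⟨hf, hh⟩
      · rintro ⟨hf, hh⟩; exact ⟨Or.inr hf, hh⟩
    have hindeg : D.indeg (insert e F) v = D.indeg F v := by rw [indeg, hin]; rfl
    obtain ⟨P, hlen, hP, hDj⟩ := D.exists_opt (F := F) (r := r) hv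
    have h1 : D.lam F r v ≤ D.lam (insert e F) r v := by
      have := D.le_lam hv (fun p hp => D.pathIn_mono hsub (hP p hp)) hDj
      omega
    have h2 := D.lam_le_indeg (F := insert e F) (r := r) hv
    have h3 := hF v hv
    omega
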